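/- Let L1 and L2 be finite groups and let (G, p1, p2) be a witness system for the compatibility of (L1, L2) such that |G| is minimal among all witness systems for (L1, L2). Then L2 and G have the same set of composition factors up to isomorphism (ignoring multiplicity): a finite simple group T is a composition factor of L2 if and only if T is a composition factor of G. -/

import Mathlib

set_option maxHeartbeats 1000000

/-- `T` is a section of `G`: some subgroup of `G` surjects onto `T`. -/
def Gsec (T G : Type) [Group T] [Group G] : Prop :=
  ∃ (H : Subgroup G) (f : ↥H →* T), Function.Surjective f

section GsecLemmas

variable {T T' G Y Z : Type} [Group T] [Group T'] [Group G] [Group Y] [Group Z]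

theorem gsec_of_surjective (f : G →* T) (hf : Function.Surjective f) : Gsec T G := by
  refine ⟨⊤, f.comp (Subgroup.topEquiv).toMonoidHom, fun t => ?_⟩
  obtain ⟨g, rfl⟩ := hf t
  exact ⟨⟨g, trivial⟩, rfl⟩

theorem gsec_of_injective (f : Y →* Z) (hf : Function.Injective f) (h : Gsec T Y) : Gsec T Z := by
  obtain ⟨H, g, hg⟩ := h
  exact ⟨H.map f, g.comp ((H.equivMapOfInjective f hf).symm.toMonoidHom),
    hg.comp (MulEquiv.surjective _)⟩

theorem gsec_of_le {H K : Subgroup G} (h : H ≤ K) (hs : Gsec T ↥H) : Gsec T ↥K :=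
  gsec_of_injective (Subgroup.inclusion h) (Subgroup.inclusion_injective h) hs

theorem gsec_of_subgroup (H : Subgroup G) (hs : Gsec T ↥H) : Gsec T G :=
  gsec_of_injective H.subtype H.subtype_injective hs

theorem gsec_of_hom_surj (f : Y →* Z) (hf : Function.Surjective f) (h : Gsec T Z) : Gsec T Y := by
  obtain ⟨H, g, hg⟩ := h
  refine ⟨H.comap f, g.comp (((f.comp (H.comap f).subtype)).codRestrict H
    (fun x => x.2)), fun t => ?_⟩
  obtain ⟨y, hy⟩ := hg t
  obtain ⟨x, hx⟩ := hf (y : Z)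
  have hxm : x ∈ H.comap f := by simp [Subgroup.mem_comap, hx, y.2]
  refine ⟨⟨x, hxm⟩, ?_⟩
  have : ((f.comp (H.comap f).subtype).codRestrict H (fun x => x.2)) ⟨x, hxm⟩ = y := by
    apply Subtype.ext; exact hx
  simp [this, hy]

theorem gsec_iso (e : Y ≃* Z) (h : Gsec T Y) : Gsec T Z :=
  gsec_of_injective e.toMonoidHom e.injective h

theorem gsec_congr (e : T ≃* T') (h : Gsec T Y) : Gsec T' Y := by
  obtain ⟨H, f, hf⟩ := h
  exact ⟨H, e.toMonoidHom.comp f, e.surjective.comp hf⟩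

theorem not_gsec_of_subsingleton [Subsingleton Y] [Nontrivial T] : ¬ Gsec T Y := by
  rintro ⟨H, f, hf⟩
  have : Subsingleton T := hf.subsingleton
  exact not_subsingleton T this

theorem gsec_self [Nontrivial T] : Gsec T T :=
  gsec_of_surjective (MonoidHom.id T) Function.surjective_id

theorem gsec_trans {S : Type} [Group S] (h1 : Gsec T S) (h2 : Gsec S Y) : Gsec T Y := by
  obtain ⟨H, g, hg⟩ := h2
  exact gsec_of_subgroup H (gsec_of_hom_surj g hg h1)

/-- Extension splitting: a simple section of `G` is a section of `N` or of `G/N`. -/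
theorem gsec_ext (hT : IsSimpleGroup T) (N : Subgroup G) (hN : N.Normal) (h : Gsec T G) :
    Gsec T ↥N ∨ Gsec T (G ⧸ N) := by
  obtain ⟨H, f, hf⟩ := h
  have hA : (N.subgroupOf H).Normal := hN.subgroupOf H
  have hmap : ((N.subgroupOf H).map f).Normal := hA.map f hf
  rcases hT.eq_bot_or_eq_top_of_normal _ hmap with hb | ht
  · -- N ∩ H ≤ ker f; factor through the quotient
    right
    have hker : N.subgroupOf H ≤ f.ker := by
      intro x hx
      have : f x ∈ (N.subgroupOf H).map f := ⟨x, hx, rfl⟩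
      rw [hb, Subgroup.mem_bot] at this
      simpa [MonoidHom.mem_ker] using this
    have : Nonempty (G ⧸ N) := ⟨(1 : G ⧸ N)⟩
    set m : ↥H →* ↥(H.map (QuotientGroup.mk' N)) := (QuotientGroup.mk' N).subgroupMap H
    have hm : Function.Surjective m := (QuotientGroup.mk' N).subgroupMap_surjective H
    have hkerm : m.ker = N.subgroupOf H := by
      ext x
      simp only [MonoidHom.mem_ker, Subgroup.mem_subgroupOf]
      have hcoe : ((m x : G ⧸ N)) = QuotientGroup.mk (x : G) := rfl
      constructor
      · intro hx
        have h1 : ((m x : G ⧸ N)) = 1 := by rw [hx]; rfl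
        rw [hcoe] at h1
        exact (QuotientGroup.eq_one_iff _).mp h1
      · intro hx
        apply Subtype.ext
        show ((m x : G ⧸ N)) = ((1 : ↥(Subgroup.map (QuotientGroup.mk' N) H)) : G ⧸ N)
        rw [hcoe]
        exact (QuotientGroup.eq_one_iff _).mpr hx
    have hkerle : m.ker ≤ f.ker := by rw [hkerm]; exact hker
    -- lift f along m
    set f' : ↥(H.map (QuotientGroup.mk' N)) →* T :=
      (QuotientGroup.lift m.ker f hkerle).comp
        ((QuotientGroup.quotientKerEquivOfSurjective m hm).symm.toMonoidHom)
    have hlift : Function.Surjective (QuotientGroup.lift m.ker f hkerle) := by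
      intro t
      obtain ⟨x, rfl⟩ := hf t
      exact ⟨QuotientGroup.mk x, rfl⟩
    have hf' : Function.Surjective f' :=
      hlift.comp (QuotientGroup.quotientKerEquivOfSurjective m hm).symm.surjective
    exact gsec_of_subgroup _ ⟨⊤, f'.comp (Subgroup.topEquiv).toMonoidHom,
      fun t => by obtain ⟨g, hg⟩ := hf' t; exact ⟨⟨g, trivial⟩, hg⟩⟩
  · -- f restricted to N ∩ H is onto T
    left
    set g : ↥(N.subgroupOf H) →* T := f.comp (N.subgroupOf H).subtype
    have hg : Function.Surjective g := by
      intro t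
      have : t ∈ (N.subgroupOf H).map f := by rw [ht]; trivial
      obtain ⟨x, hx, rfl⟩ := this
      exact ⟨⟨x, hx⟩, rfl⟩
    have hsec : Gsec T ↥(N.subgroupOf H) := gsec_of_surjective g hg
    refine gsec_of_injective ((H.subtype.comp (N.subgroupOf H).subtype).codRestrict N
      (fun x => x.2)) ?_ hsec
    intro a b hab
    exact Subtype.ext (Subtype.ext (congrArg (fun x : ↥N => (x : G)) hab))
section MultMachinery

/-- Composition-factor multiplicity witness: `Mult T G n` means `G` has a composition series
in which exactly `n` factors are isomorphic to `T`. -/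
inductive Mult (T : Type) [Group T] : (G : Type) → [inst : Group G] → ℕ → Prop
  | triv (G : Type) [Group G] (h : Subsingleton G) : Mult T G 0
  | step (G : Type) [Group G] (M : Subgroup G) [hn : M.Normal] (hs : IsSimpleGroup (G ⧸ M))
      (hiso : Nonempty ((G ⧸ M) ≃* T)) {n : ℕ} (h : Mult T ↥M n) : Mult T G (n + 1)
  | step' (G : Type) [Group G] (M : Subgroup G) [hn : M.Normal] (hs : IsSimpleGroup (G ⧸ M))
      (hiso : ¬ Nonempty ((G ⧸ M) ≃* T)) {n : ℕ} (h : Mult T ↥M n) : Mult T G n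

variable {T : Type} [Group T]

theorem subgroup_card_lt {G : Type} [Group G] [Finite G] {H K : Subgroup G} (h : H < K) :
    Nat.card ↥H < Nat.card ↥K := by
  have h' : (H : Set G) ⊂ (K : Set G) := SetLike.coe_ssubset_coe.mpr h
  have := Set.ncard_lt_ncard h' (Set.toFinite _)
  rw [← Nat.card_coe_set_eq, ← Nat.card_coe_set_eq] at this
  exact this

theorem subgroup_eq_of_le_of_card_le {G : Type} [Group G] [Finite G] {H K : Subgroup G}
    (hle : H ≤ K) (hc : Nat.card ↥K ≤ Nat.card ↥H) : H = K := by
  by_contra hne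
  exact lt_irrefl _ (lt_of_lt_of_le (subgroup_card_lt (hle.lt_of_ne hne)) hc)

theorem card_lt_of_ne_top {G : Type} [Group G] [Finite G] {M : Subgroup G} (h : M ≠ ⊤) :
    Nat.card ↥M < Nat.card G := by
  have h2 : Nat.card ↥M < Nat.card ↥(⊤ : Subgroup G) :=
    subgroup_card_lt (lt_top_iff_ne_top.mpr h)
  rwa [Nat.card_congr Subgroup.topEquiv.toEquiv] at h2

theorem quotient_nontrivial {G : Type} [Group G] {M : Subgroup G} [M.Normal] (h : M ≠ ⊤) :
    Nontrivial (G ⧸ M) := by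
  have hx : ∃ x, x ∉ M := by
    by_contra hc
    push_neg at hc
    exact h ((Subgroup.eq_top_iff' M).mpr hc)
  obtain ⟨x, hx⟩ := hx
  exact ⟨QuotientGroup.mk x, 1, fun h1 => hx ((QuotientGroup.eq_one_iff x).mp h1)⟩

theorem ne_top_of_quotient_nontrivial {G : Type} [Group G] {M : Subgroup G} [M.Normal]
    (h : Nontrivial (G ⧸ M)) : M ≠ ⊤ := by
  rintro rfl
  haveI := h
  exact (not_subsingleton (G ⧸ (⊤ : Subgroup G))) QuotientGroup.subsingleton_quotient_top

theorem isSimpleGroup_congr {A B : Type} [Group A] [Group B] (e : A ≃* B)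
    (h : IsSimpleGroup A) : IsSimpleGroup B := by
  haveI : Nontrivial A := h.toNontrivial
  haveI : Nontrivial B := e.symm.toEquiv.nontrivial
  exact IsSimpleGroup.isSimpleGroup_of_surjective e.toMonoidHom e.surjective

theorem exists_maxnormal (G : Type) [Group G] [Finite G] (hG : Nontrivial G) :
    ∃ M : Subgroup G, (M.Normal ∧ M ≠ ⊤) ∧
      ∀ N : Subgroup G, (N.Normal ∧ N ≠ ⊤) → Nat.card ↥N ≤ Nat.card ↥M := by
  have hne : {N : Subgroup G | N.Normal ∧ N ≠ ⊤}.Nonempty :=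
    ⟨⊥, inferInstance, bot_ne_top⟩
  haveI : Finite (Subgroup G) :=
    Finite.of_injective (fun H => (H : Set G)) SetLike.coe_injective
  obtain ⟨M, hM, hmax⟩ := Set.exists_max_image {N : Subgroup G | N.Normal ∧ N ≠ ⊤}
    (fun N => Nat.card ↥N) (Set.toFinite _) hne
  exact ⟨M, hM, hmax⟩

theorem simple_quotient_of_maxnormal {G : Type} [Group G] [Finite G] (M : Subgroup G)
    [hn : M.Normal] (hne : M ≠ ⊤)
    (hmax : ∀ N : Subgroup G, (N.Normal ∧ N ≠ ⊤) → Nat.card ↥N ≤ Nat.card ↥M) :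
    IsSimpleGroup (G ⧸ M) := by
  haveI := quotient_nontrivial hne
  refine ⟨fun P hP => ?_⟩
  set P' := P.comap (QuotientGroup.mk' M) with hP'def
  have hP' : P'.Normal := hP.comap _
  have hMP' : M ≤ P' := by
    intro x hx
    have h1 : (QuotientGroup.mk' M) x = 1 := (QuotientGroup.eq_one_iff x).mpr hx
    simp only [hP'def, Subgroup.mem_comap, h1]
    exact P.one_mem
  have hmap : Subgroup.map (QuotientGroup.mk' M) P' = P :=
    Subgroup.map_comap_eq_self_of_surjective (QuotientGroup.mk'_surjective M) P
  by_cases htop : P' = ⊤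
  · right
    rw [← hmap, htop, Subgroup.map_top_of_surjective _ (QuotientGroup.mk'_surjective M)]
  · left
    have hMeq : M = P' := subgroup_eq_of_le_of_card_le hMP' (hmax P' ⟨hP', htop⟩)
    rw [← hmap, ← hMeq, Subgroup.map_eq_bot_iff, QuotientGroup.ker_mk']

theorem mult_exists (T : Type) [Group T] :
    ∀ (k : ℕ) (G : Type) [Group G] [Finite G], Nat.card G ≤ k → ∃ n, Mult T G n := by
  intro k
  induction k with
  | zero =>
    intro G _ _ hk
    exact absurd (Nat.card_pos (α := G)) (by omega)
  | succ k ih =>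
    intro G instG finG hk
    rcases subsingleton_or_nontrivial G with hs | hnt
    · exact ⟨0, Mult.triv G hs⟩
    · obtain ⟨M, ⟨hnorm, hne⟩, hmax⟩ := exists_maxnormal G hnt
      haveI := hnorm
      have hsimp := simple_quotient_of_maxnormal M hne hmax
      have hlt : Nat.card ↥M < Nat.card G := card_lt_of_ne_top hne
      obtain ⟨n, hm⟩ := ih ↥M (by omega)
      rcases Classical.em (Nonempty ((G ⧸ M) ≃* T)) with hiso | hiso
      · exact ⟨n + 1, Mult.step G M hsimp hiso hm⟩
      · exact ⟨n, Mult.step' G M hsimp hiso hm⟩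

open scoped Classical in
/-- 1 if `Q ≅ T`, else 0. -/
noncomputable def eps (T Q : Type) [Group T] [Group Q] : ℕ :=
  if Nonempty (Q ≃* T) then 1 else 0

theorem eps_one {Q : Type} [Group Q] (h : Nonempty (Q ≃* T)) : eps T Q = 1 := by
  simp [eps, h]

theorem eps_zero {Q : Type} [Group Q] (h : ¬ Nonempty (Q ≃* T)) : eps T Q = 0 := by
  simp [eps, h]

theorem eps_congr {Q Q' : Type} [Group Q] [Group Q'] (e : Q ≃* Q') : eps T Q = eps T Q' := by
  by_cases h : Nonempty (Q' ≃* T)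
  · rw [eps_one h, eps_one ⟨e.trans h.some⟩]
  · rw [eps_zero h, eps_zero (fun ⟨i⟩ => h ⟨e.symm.trans i⟩)]

theorem mult_step_eps {G : Type} [Group G] (M : Subgroup G) [hn : M.Normal]
    (hs : IsSimpleGroup (G ⧸ M)) {n : ℕ} (h : Mult T ↥M n) : Mult T G (n + eps T (G ⧸ M)) := by
  by_cases hiso : Nonempty ((G ⧸ M) ≃* T)
  · rw [eps_one hiso]; exact Mult.step G M hs hiso h
  · rw [eps_zero hiso, Nat.add_zero]; exact Mult.step' G M hs hiso h

theorem mult_cases {G : Type} [Group G] {w : ℕ} {motive : Prop} (h : Mult T G w)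
    (htriv : Subsingleton G → w = 0 → motive)
    (hstep : ∀ (M : Subgroup G) [hn : M.Normal] (n' : ℕ), IsSimpleGroup (G ⧸ M) →
      Mult T ↥M n' → w = n' + eps T (G ⧸ M) → motive) : motive := by
  cases h with
  | triv _ hs => exact htriv hs rfl
  | step _ M hs hiso hm => exact hstep M _ hs hm (by rw [eps_one hiso])
  | step' _ M hs hiso hm => exact hstep M _ hs hm (by rw [eps_zero hiso]; omega)

theorem mult_congr {G : Type} [Group G] {n : ℕ} (h : Mult T G n) :
    ∀ {G' : Type} [Group G'], (G ≃* G') → Mult T G' n := by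
  induction h with
  | triv G h =>
    intro G' _ e
    exact Mult.triv G' (e.symm.toEquiv.injective.subsingleton)
  | step G M hs hiso hm ih =>
    rename_i instG hn n
    intro G' instG' e
    haveI : (M.map e.toMonoidHom).Normal := hn.map e.toMonoidHom e.surjective
    have equot : (G ⧸ M) ≃* (G' ⧸ M.map e.toMonoidHom) := QuotientGroup.congr M _ e rfl
    exact Mult.step G' (M.map e.toMonoidHom) (isSimpleGroup_congr equot hs)
      ⟨equot.symm.trans hiso.some⟩ (ih (M.equivMapOfInjective e.toMonoidHom e.injective))
  | step' G M hs hiso hm ih =>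
    rename_i instG hn n
    intro G' instG' e
    haveI : (M.map e.toMonoidHom).Normal := hn.map e.toMonoidHom e.surjective
    have equot : (G ⧸ M) ≃* (G' ⧸ M.map e.toMonoidHom) := QuotientGroup.congr M _ e rfl
    exact Mult.step' G' (M.map e.toMonoidHom) (isSimpleGroup_congr equot hs)
      (fun ⟨i⟩ => hiso ⟨equot.trans i⟩) (ih (M.equivMapOfInjective e.toMonoidHom e.injective))

end MultMachinery
section MultUnique

variable {T : Type} [Group T]

theorem normal_inf {G : Type} [Group G] {M N : Subgroup G} (hM : M.Normal) (hN : N.Normal) :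
    (M ⊓ N).Normal := by
  constructor
  intro x hx g
  exact ⟨hM.conj_mem x hx.1 g, hN.conj_mem x hx.2 g⟩

theorem sup_eq_top_of_maximal {G : Type} [Group G] {M N : Subgroup G}
    (hnM : M.Normal) (hnN : N.Normal) (hsM : IsSimpleGroup (G ⧸ M))
    (hsN : IsSimpleGroup (G ⧸ N)) (hMN : M ≠ N) : M ⊔ N = ⊤ := by
  haveI := hnM; haveI := hnN
  have hmapN : (M.map (QuotientGroup.mk' N)).Normal :=
    hnM.map _ (QuotientGroup.mk'_surjective N)
  rcases hsN.eq_bot_or_eq_top_of_normal _ hmapN with hb | ht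
  · exfalso
    have hMN' : M ≤ N := by
      rw [Subgroup.map_eq_bot_iff, QuotientGroup.ker_mk'] at hb; exact hb
    have hmapM : (N.map (QuotientGroup.mk' M)).Normal :=
      hnN.map _ (QuotientGroup.mk'_surjective M)
    rcases hsM.eq_bot_or_eq_top_of_normal _ hmapM with hb2 | ht2
    · have hNM' : N ≤ M := by
        rw [Subgroup.map_eq_bot_iff, QuotientGroup.ker_mk'] at hb2; exact hb2
      exact hMN (le_antisymm hMN' hNM')
    · have hsup : N ⊔ M = ⊤ := by
        have := congrArg (Subgroup.comap (QuotientGroup.mk' M)) ht2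
        rwa [Subgroup.comap_map_eq, QuotientGroup.ker_mk', Subgroup.comap_top] at this
      have hNtop : N = ⊤ := by rwa [sup_eq_left.mpr hMN'] at hsup
      exact (ne_top_of_quotient_nontrivial hsN.toNontrivial) hNtop
  · have := congrArg (Subgroup.comap (QuotientGroup.mk' N)) ht
    rwa [Subgroup.comap_map_eq, QuotientGroup.ker_mk', Subgroup.comap_top] at this

/-- Second isomorphism route: `M/(M ∩ N) ≃ G/N` when `M ⊔ N = ⊤`. -/
noncomputable def secondIsoTop {G : Type} [Group G] (M N : Subgroup G) [hnN : N.Normal]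
    (htop : M ⊔ N = ⊤) : (↥M ⧸ N.subgroupOf M) ≃* G ⧸ N := by
  have e1 := QuotientGroup.quotientInfEquivProdNormalQuotient M N
  rw [htop] at e1
  haveI : (N.subgroupOf (⊤ : Subgroup G)).Normal := hnN.subgroupOf ⊤
  have hmap : Subgroup.map (Subgroup.topEquiv : ↥(⊤ : Subgroup G) ≃* G).toMonoidHom
      (N.subgroupOf (⊤ : Subgroup G)) = N := by
    ext x
    simp only [Subgroup.mem_map, Subgroup.mem_subgroupOf]
    constructor
    · rintro ⟨y, hy, rfl⟩; exact hy
    · intro hx; exact ⟨⟨x, trivial⟩, hx, rfl⟩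
  exact e1.trans (QuotientGroup.congr (N.subgroupOf (⊤ : Subgroup G)) N Subgroup.topEquiv hmap)

theorem subgroupOf_inf_left {G : Type} [Group G] (M N : Subgroup G) :
    (M ⊓ N).subgroupOf M = N.subgroupOf M := by
  ext x
  simp only [Subgroup.mem_subgroupOf, Subgroup.mem_inf]
  exact ⟨fun h => h.2, fun h => ⟨x.2, h⟩⟩

theorem mult_unique (T : Type) [Group T] :
    ∀ (k : ℕ) (G : Type) [Group G] [Finite G], Nat.card G ≤ k →
      ∀ {n m : ℕ}, Mult T G n → Mult T G m → n = m := by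
  intro k
  induction k with
  | zero =>
    intro G _ _ hk
    exact absurd (Nat.card_pos (α := G)) (by omega)
  | succ k ih =>
    intro G instG finG hk n m h1 h2
    refine mult_cases h1 (fun hss hn0 => ?_) (fun M hnM n1 hsM hm1 heq1 => ?_)
    · -- G subsingleton
      refine mult_cases h2 (fun _ hm0 => by omega) (fun N hnN m1 hsN hm2 heq2 => ?_)
      haveI := hnN
      haveI : Subsingleton (G ⧸ N) := (QuotientGroup.mk'_surjective N).subsingleton
      exact absurd hsN.toNontrivial (not_nontrivial _)
    · refine mult_cases h2 (fun hss hm0 => ?_) (fun N hnN m1 hsN hm2 heq2 => ?_)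
      · haveI := hnM
        haveI : Subsingleton (G ⧸ M) := (QuotientGroup.mk'_surjective M).subsingleton
        exact absurd hsM.toNontrivial (not_nontrivial _)
      · haveI := hnM; haveI := hnN
        have hMne : M ≠ ⊤ := ne_top_of_quotient_nontrivial hsM.toNontrivial
        have hNne : N ≠ ⊤ := ne_top_of_quotient_nontrivial hsN.toNontrivial
        have hcM : Nat.card ↥M ≤ k := by
          have := card_lt_of_ne_top hMne; omega
        have hcN : Nat.card ↥N ≤ k := by
          have := card_lt_of_ne_top hNne; omega
        by_cases hMN : M = N
        · subst hMN
          have : n1 = m1 := ih ↥M hcM hm1 hm2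
          omega
        · -- the interesting case
          have htopMN : M ⊔ N = ⊤ := sup_eq_top_of_maximal hnM hnN hsM hsN hMN
          have htopNM : N ⊔ M = ⊤ := by rwa [sup_comm] at htopMN
          obtain ⟨c, hc⟩ := mult_exists T (Nat.card ↥(M ⊓ N)) ↥(M ⊓ N) le_rfl
          -- lower factor inside M
          have eM : ↥(M ⊓ N) ≃* ↥(N.subgroupOf M) := by
            have e0 := (Subgroup.subgroupOfEquivOfLe (inf_le_left : M ⊓ N ≤ M)).symm
            rwa [subgroupOf_inf_left] at e0
          have eN : ↥(N ⊓ M) ≃* ↥(M.subgroupOf N) := by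
            have e0 := (Subgroup.subgroupOfEquivOfLe (inf_le_left : N ⊓ M ≤ N)).symm
            rwa [subgroupOf_inf_left] at e0
          have hc' : Mult T ↥(N ⊓ M) c := mult_congr hc
            (Subgroup.equivMapOfInjective _ (MonoidHom.id G) (fun a b h => h) |>.trans
              (by rw [inf_comm]; exact (Subgroup.equivMapOfInjective _ (MonoidHom.id G)
                (fun a b h => h)).symm))
          haveI : (N.subgroupOf M).Normal := hnN.subgroupOf M
          haveI : (M.subgroupOf N).Normal := hnM.subgroupOf N
          have isoM : (↥M ⧸ N.subgroupOf M) ≃* G ⧸ N := secondIsoTop M N htopMN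
          have isoN : (↥N ⧸ M.subgroupOf N) ≃* G ⧸ M := secondIsoTop N M htopNM
          have hsM' : IsSimpleGroup (↥M ⧸ N.subgroupOf M) := isSimpleGroup_congr isoM.symm hsN
          have hsN' : IsSimpleGroup (↥N ⧸ M.subgroupOf N) := isSimpleGroup_congr isoN.symm hsM
          have stepM : Mult T ↥M (c + eps T (↥M ⧸ N.subgroupOf M)) :=
            mult_step_eps (N.subgroupOf M) hsM' (mult_congr hc eM)
          have stepN : Mult T ↥N (c + eps T (↥N ⧸ M.subgroupOf N)) :=
            mult_step_eps (M.subgroupOf N) hsN' (mult_congr hc' eN)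
          have hn1 : n1 = c + eps T (G ⧸ N) := by
            have := ih ↥M hcM hm1 stepM
            rwa [eps_congr isoM] at this
          have hm1' : m1 = c + eps T (G ⧸ M) := by
            have := ih ↥N hcN hm2 stepN
            rwa [eps_congr isoN] at this
          omega

end MultUnique
section MultAdd

variable {T : Type} [Group T]

theorem mult_add (T : Type) [Group T] :
    ∀ (k : ℕ) (Q : Type) [Group Q] [Finite Q], Nat.card Q ≤ k → ∀ {b : ℕ}, Mult T Q b →
      ∀ (G : Type) [Group G] [Finite G] (N : Subgroup G) [hN : N.Normal],
        ((G ⧸ N) ≃* Q) → ∀ {a : ℕ}, Mult T ↥N a → Mult T G (a + b) := by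
  intro k
  induction k with
  | zero =>
    intro Q _ _ hk
    exact absurd (Nat.card_pos (α := Q)) (by omega)
  | succ k ih =>
    intro Q instQ finQ hk b hb
    refine mult_cases hb (fun hss hb0 => ?_) (fun M' hnM' b' hsM' hb' heq => ?_)
    · -- Q trivial, so N = ⊤
      intro G instG finG N hN e a ha
      haveI : Subsingleton (G ⧸ N) := e.toEquiv.injective.subsingleton
      have hNtop : N = ⊤ := by
        refine (Subgroup.eq_top_iff' N).mpr (fun x => ?_)
        exact (QuotientGroup.eq_one_iff x).mp (Subsingleton.elim _ _)
      have eN : ↥N ≃* G := by rw [hNtop]; exact Subgroup.topEquiv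
      have := mult_congr ha eN
      simpa [hb0] using this
    · intro G instG finG N hN e a ha
      haveI := hnM'
      set f : G →* Q := e.toMonoidHom.comp (QuotientGroup.mk' N) with hfdef
      have hf : Function.Surjective f := e.surjective.comp (QuotientGroup.mk'_surjective N)
      have hkerf : f.ker = N := by
        ext x
        simp [hfdef, MonoidHom.mem_ker, MulEquiv.map_eq_one_iff, QuotientGroup.eq_one_iff]
      set M : Subgroup G := M'.comap f with hMdef
      haveI hM : M.Normal := hnM'.comap f
      have hNM : N ≤ M := by
        intro x hx
        have hx1 : f x = 1 := by rw [← hkerf] at hx; exact hx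
        simp only [hMdef, Subgroup.mem_comap, hx1]
        exact M'.one_mem
      have hMmap : M.map f = M' := Subgroup.map_comap_eq_self_of_surjective hf M'
      set g : ↥M →* ↥M' :=
        (MulEquiv.subgroupCongr hMmap).toMonoidHom.comp (f.subgroupMap M) with hgdef
      have hg : Function.Surjective g :=
        (MulEquiv.subgroupCongr hMmap).surjective.comp (f.subgroupMap_surjective M)
      have hkerg : g.ker = N.subgroupOf M := by
        ext x
        have hcoe : ((g x : Q)) = f (x : G) := rfl
        simp only [MonoidHom.mem_ker, Subgroup.mem_subgroupOf]
        constructor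
        · intro hx
          have : ((g x : Q)) = 1 := by rw [hx]; rfl
          rw [hcoe] at this
          rw [← hkerf]; exact this
        · intro hx
          apply Subtype.ext
          rw [hcoe]
          rw [← hkerf] at hx; exact hx
      haveI : (N.subgroupOf M).Normal := hN.subgroupOf M
      have e' : (↥M ⧸ N.subgroupOf M) ≃* ↥M' :=
        (QuotientGroup.quotientMulEquivOfEq hkerg.symm).trans
          (QuotientGroup.quotientKerEquivOfSurjective g hg)
      have ha' : Mult T ↥(N.subgroupOf M) a :=
        mult_congr ha (Subgroup.subgroupOfEquivOfLe hNM).symm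
      have hM'ne : M' ≠ ⊤ := ne_top_of_quotient_nontrivial hsM'.toNontrivial
      have hcM' : Nat.card ↥M' ≤ k := by
        have := card_lt_of_ne_top hM'ne; omega
      have hinner : Mult T ↥M (a + b') := ih ↥M' hcM' hb' ↥M (N.subgroupOf M) e' ha'
      -- outer step
      have hker2 : ((QuotientGroup.mk' M').comp f).ker = M := by
        ext x
        simp [MonoidHom.mem_ker, QuotientGroup.eq_one_iff, hMdef, Subgroup.mem_comap]
      have eG : (G ⧸ M) ≃* Q ⧸ M' :=
        (QuotientGroup.quotientMulEquivOfEq hker2.symm).trans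
          (QuotientGroup.quotientKerEquivOfSurjective _
            ((QuotientGroup.mk'_surjective M').comp hf))
      have hsG : IsSimpleGroup (G ⧸ M) := isSimpleGroup_congr eG.symm hsM'
      have hres : Mult T G ((a + b') + eps T (G ⧸ M)) := mult_step_eps M hsG hinner
      have heps : eps T (G ⧸ M) = eps T (Q ⧸ M') := eps_congr eG
      have : a + b = a + b' + eps T (G ⧸ M) := by rw [heps]; omega
      rwa [← this] at hres

end MultAdd
section HasCFLemmas

/-- `S` occurs as a (true) composition factor of `X`. -/
def HasCF (S X : Type) [Group S] [Group X] : Prop := ∃ n, Mult S X n ∧ 0 < n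

theorem gsec_of_mult_pos {S X : Type} [Group S] [Group X] {n : ℕ} (h : Mult S X n) :
    0 < n → Gsec S X := by
  induction h with
  | triv G h => omega
  | step G M hs hiso hm ih =>
    intro _
    exact gsec_of_surjective (hiso.some.toMonoidHom.comp (QuotientGroup.mk' M))
      (hiso.some.surjective.comp (QuotientGroup.mk'_surjective M))
  | step' G M hs hiso hm ih =>
    intro hpos
    exact gsec_of_subgroup M (ih hpos)

theorem gsec_of_hasCF {S X : Type} [Group S] [Group X] (h : HasCF S X) : Gsec S X := by
  obtain ⟨n, hm, hpos⟩ := h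
  exact gsec_of_mult_pos hm hpos

theorem hasCF_congr {S X Y : Type} [Group S] [Group X] [Group Y] (e : X ≃* Y)
    (h : HasCF S X) : HasCF S Y := by
  obtain ⟨n, hm, hpos⟩ := h
  exact ⟨n, mult_congr hm e, hpos⟩

theorem gsec_exists_simple (T : Type) [Group T] (hT : IsSimpleGroup T) :
    ∀ (k : ℕ) (X : Type) [Group X] [Finite X], Nat.card X ≤ k → Gsec T X →
      ∃ (S : Type) (iS : Group S), ∃ (_ : Finite S),
        IsSimpleGroup S ∧ HasCF S X ∧ Gsec T S := by
  intro k
  induction k with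
  | zero =>
    intro X _ _ hk
    exact absurd (Nat.card_pos (α := X)) (by omega)
  | succ k ih =>
    intro X instX finX hk hsec
    rcases subsingleton_or_nontrivial X with hss | hnt
    · haveI := hT.toNontrivial
      exact absurd hsec not_gsec_of_subsingleton
    · obtain ⟨M, ⟨hnorm, hne⟩, hmax⟩ := exists_maxnormal X hnt
      haveI := hnorm
      have hsimp := simple_quotient_of_maxnormal M hne hmax
      have hlt : Nat.card ↥M < Nat.card X := card_lt_of_ne_top hne
      rcases gsec_ext hT M hnorm hsec with hN | hQ
      · obtain ⟨S, iS, fS, hSsimp, ⟨nS, hmult, hpos⟩, hTS⟩ := ih ↥M (by omega) hN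
        obtain ⟨mQ, hmQ⟩ := mult_exists S (Nat.card (X ⧸ M)) (X ⧸ M) le_rfl
        have hXmult : Mult S X (nS + mQ) :=
          mult_add S (Nat.card (X ⧸ M)) (X ⧸ M) le_rfl hmQ X M (MulEquiv.refl _) hmult
        exact ⟨S, iS, fS, hSsimp, ⟨nS + mQ, hXmult, by omega⟩, hTS⟩
      · obtain ⟨c, hc⟩ := mult_exists (X ⧸ M) (Nat.card ↥M) ↥M le_rfl
        exact ⟨X ⧸ M, inferInstance, inferInstance, hsimp,
          ⟨c + 1, Mult.step X M hsimp ⟨MulEquiv.refl _⟩ hc, by omega⟩, hQ⟩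

end HasCFLemmas
section Residual

/-- The set of normal subgroups `N` of `X` such that `T` is not a section of `X/N`. -/
def Qual (T X : Type) [Group T] [Group X] : Set (Subgroup X) :=
  {N | ∃ hn : N.Normal, ¬ @Gsec T (X ⧸ N) _ (@QuotientGroup.Quotient.group X _ N hn)}

/-- The `T`-section-residual of `X`: the smallest normal subgroup whose quotient has no
section isomorphic to `T`. -/
noncomputable def resid (T X : Type) [Group T] [Group X] : Subgroup X := sInf (Qual T X)

variable {T : Type} [Group T]

theorem qual_top {X : Type} [Group X] [Nontrivial T] : (⊤ : Subgroup X) ∈ Qual T X := by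
  refine ⟨inferInstance, ?_⟩
  haveI : Subsingleton (X ⧸ (⊤ : Subgroup X)) := QuotientGroup.subsingleton_quotient_top
  exact not_gsec_of_subsingleton

theorem qual_inf {X : Type} [Group X] (hT : IsSimpleGroup T) {N M : Subgroup X}
    (hN : N ∈ Qual T X) (hM : M ∈ Qual T X) : N ⊓ M ∈ Qual T X := by
  obtain ⟨hnN, hqN⟩ := hN
  obtain ⟨hnM, hqM⟩ := hM
  haveI := hnN; haveI := hnM
  have hnK : (N ⊓ M).Normal := normal_inf hnN hnM
  refine ⟨hnK, ?_⟩
  intro hsec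
  haveI := hnK
  set D : Subgroup (X ⧸ (N ⊓ M)) := M.map (QuotientGroup.mk' (N ⊓ M)) with hDdef
  haveI hDn : D.Normal := hnM.map _ (QuotientGroup.mk'_surjective _)
  rcases gsec_ext hT D hDn hsec with hD | hQ
  · -- inject D into X / N
    set w : ↥D →* X ⧸ N :=
      (QuotientGroup.map (N ⊓ M) N (MonoidHom.id X) inf_le_left).comp D.subtype with hwdef
    have hw : Function.Injective w := by
      refine (injective_iff_map_eq_one w).mpr (fun d hd => ?_)
      obtain ⟨x, hxM, hx⟩ := d.2
      have hdx : (d : X ⧸ (N ⊓ M)) = QuotientGroup.mk x := hx.symm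
      have : w d = QuotientGroup.mk x := by
        rw [hwdef]
        simp only [MonoidHom.coe_comp, Function.comp_apply, Subgroup.coe_subtype, hdx]
        exact QuotientGroup.map_mk (N ⊓ M) N (MonoidHom.id X) inf_le_left x
      rw [this] at hd
      have hxN : x ∈ N := (QuotientGroup.eq_one_iff x).mp hd
      have hxK : x ∈ N ⊓ M := ⟨hxN, hxM⟩
      apply Subtype.ext
      rw [hdx]
      exact (QuotientGroup.eq_one_iff x).mpr hxK
    exact hqN (gsec_of_injective w hw hD)
  · refine hqM (gsec_iso (QuotientGroup.quotientQuotientEquivQuotient (N ⊓ M) M inf_le_right) hQ)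

theorem resid_mem {X : Type} [Group X] [Finite X] (hT : IsSimpleGroup T) :
    resid T X ∈ Qual T X := by
  haveI := hT.toNontrivial
  have hne : (Qual T X).Nonempty := ⟨⊤, qual_top⟩
  haveI : Finite (Subgroup X) :=
    Finite.of_injective (fun H => (H : Set X)) SetLike.coe_injective
  obtain ⟨N0, hN0, hmin⟩ := Set.exists_min_image (Qual T X)
    (fun N => Nat.card ↥N) (Set.toFinite _) hne
  have hled : ∀ M ∈ Qual T X, N0 ≤ M := by
    intro M hM
    have hinf := qual_inf hT hN0 hM
    have hle : Nat.card ↥N0 ≤ Nat.card ↥(N0 ⊓ M) := hmin _ hinf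
    have heq : N0 ⊓ M = N0 := subgroup_eq_of_le_of_card_le inf_le_left hle
    exact inf_eq_left.mp heq
  have : sInf (Qual T X) = N0 := le_antisymm (sInf_le hN0) (le_sInf hled)
  rw [resid, this]
  exact hN0

theorem resid_le {X : Type} [Group X] {N : Subgroup X} (h : N ∈ Qual T X) : resid T X ≤ N :=
  sInf_le h

theorem resid_normal {X : Type} [Group X] [Finite X] (hT : IsSimpleGroup T) :
    (resid T X).Normal := (resid_mem hT).choose

theorem resid_not_gsec {X : Type} [Group X] [Finite X] (hT : IsSimpleGroup T)
    [h : (resid T X).Normal] : ¬ Gsec T (X ⧸ resid T X) := (resid_mem hT).choose_spec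

theorem map_symm_map {X Y : Type} [Group X] [Group Y] (e : X ≃* Y) (P : Subgroup Y) :
    (P.map e.symm.toMonoidHom).map e.toMonoidHom = P := by
  ext x
  simp only [Subgroup.mem_map]
  constructor
  · rintro ⟨y, ⟨z, hz, rfl⟩, rfl⟩; simpa using hz
  · intro hx; exact ⟨e.symm x, ⟨x, hx, rfl⟩, by simp⟩

theorem qual_map {X Y : Type} [Group X] [Group Y] (e : X ≃* Y) {N : Subgroup X}
    (h : N ∈ Qual T X) : N.map e.toMonoidHom ∈ Qual T Y := by
  obtain ⟨hn, hq⟩ := h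
  haveI := hn
  haveI hn' : (N.map e.toMonoidHom).Normal := hn.map e.toMonoidHom e.surjective
  refine ⟨hn', ?_⟩
  intro hsec
  exact hq (gsec_iso (QuotientGroup.congr N (N.map e.toMonoidHom) e rfl).symm hsec)

theorem resid_map {X Y : Type} [Group X] [Group Y] [Finite X] [Finite Y]
    (hT : IsSimpleGroup T) (e : X ≃* Y) :
    (resid T X).map e.toMonoidHom = resid T Y := by
  refine le_antisymm ?_ (resid_le (qual_map e (resid_mem hT)))
  have h1 : (resid T Y).map e.symm.toMonoidHom ∈ Qual T X := qual_map e.symm (resid_mem hT)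
  have h2 : resid T X ≤ (resid T Y).map e.symm.toMonoidHom := resid_le h1
  calc (resid T X).map e.toMonoidHom
      ≤ ((resid T Y).map e.symm.toMonoidHom).map e.toMonoidHom := Subgroup.map_mono h2
    _ = resid T Y := map_symm_map e _

/-- `Y` has no nontrivial quotient avoiding `T`-sections. -/
def PerfP (T Y : Type) [Group T] [Group Y] : Prop :=
  ∀ (M : Subgroup Y) (hn : M.Normal), M ≠ ⊤ →
    @Gsec T (Y ⧸ M) _ (@QuotientGroup.Quotient.group Y _ M hn)

theorem perfP_congr {Y Z : Type} [Group Y] [Group Z] (e : Y ≃* Z) (h : PerfP T Y) :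
    PerfP T Z := by
  intro M hn hne
  haveI := hn
  haveI hn' : (M.map e.symm.toMonoidHom).Normal := hn.map e.symm.toMonoidHom e.symm.surjective
  have hne' : M.map e.symm.toMonoidHom ≠ ⊤ := by
    intro htop
    have := congrArg (Subgroup.map e.toMonoidHom) htop
    rw [map_symm_map] at this
    rw [this] at hne
    exact hne (Subgroup.map_top_of_surjective _ e.surjective)
  have hsec := h (M.map e.symm.toMonoidHom) hn' hne'
  exact gsec_iso (QuotientGroup.congr _ M e (map_symm_map e M)) hsec

theorem map_subtype_top {G : Type} [Group G] (R : Subgroup G) :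
    Subgroup.map R.subtype ⊤ = R := by
  ext x
  simp [Subgroup.mem_map]

theorem perf_resid {X : Type} [Group X] [Finite X] (hT : IsSimpleGroup T) :
    PerfP T ↥(resid T X) := by
  haveI hRn : (resid T X).Normal := resid_normal hT
  set R := resid T X with hRdef
  set ρ : Subgroup ↥R := resid T ↥R with hρdef
  have hρmem := resid_mem (X := ↥R) hT
  obtain ⟨hρn, hρq⟩ := hρmem
  haveI := hρn
  set ρ' := ρ.map R.subtype with hρ'def
  have hρ'R : ρ' ≤ R := Subgroup.map_subtype_le ρ
  -- ρ' is normal in X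
  haveI hρ'n : ρ'.Normal := by
    constructor
    intro x hx g
    obtain ⟨y, hy, rfl⟩ := hx
    set e : ↥R ≃* ↥R := (MulAut.conjNormal (H := R) g : MulAut ↥R) with hedef
    have hmape : Subgroup.map e.toMonoidHom ρ = ρ := by
      rw [hρdef]; exact resid_map hT e
    have hey : e y ∈ ρ := by
      rw [← hmape]; exact ⟨y, hy, rfl⟩
    have hcoe : ((e y : ↥R) : X) = g * (y : X) * g⁻¹ := by
      rw [hedef]; exact MulAut.conjNormal_apply g y
    exact ⟨e y, hey, hcoe⟩
  -- ρ' qualifies in X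
  have hqual : ρ' ∈ Qual T X := by
    refine ⟨hρ'n, ?_⟩
    intro hsec
    set D : Subgroup (X ⧸ ρ') := R.map (QuotientGroup.mk' ρ') with hDdef
    haveI hDn : D.Normal := hRn.map _ (QuotientGroup.mk'_surjective _)
    rcases gsec_ext hT D hDn hsec with hD | hQ
    · -- D ≅ R / ρ
      set m : ↥R →* ↥D := (QuotientGroup.mk' ρ').subgroupMap R with hmdef
      have hm : Function.Surjective m := (QuotientGroup.mk' ρ').subgroupMap_surjective R
      have hkerm : m.ker = ρ := by
        ext x
        simp only [MonoidHom.mem_ker]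
        have hcoe : ((m x : X ⧸ ρ')) = QuotientGroup.mk (x : X) := rfl
        constructor
        · intro hx
          have h1 : ((m x : X ⧸ ρ')) = 1 := by rw [hx]; rfl
          rw [hcoe] at h1
          have : (x : X) ∈ ρ' := (QuotientGroup.eq_one_iff _).mp h1
          obtain ⟨y, hy, hyx⟩ := this
          have : y = x := Subtype.ext hyx
          rwa [← this]
        · intro hx
          apply Subtype.ext
          show ((m x : X ⧸ ρ')) = ((1 : ↥D) : X ⧸ ρ')
          rw [hcoe]
          exact (QuotientGroup.eq_one_iff _).mpr ⟨x, hx, rfl⟩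
      have e1 : (↥R ⧸ ρ) ≃* ↥D :=
        (QuotientGroup.quotientMulEquivOfEq hkerm.symm).trans
          (QuotientGroup.quotientKerEquivOfSurjective m hm)
      exact hρq (gsec_iso e1.symm hD)
    · exact (resid_not_gsec (X := X) hT)
        (gsec_iso (QuotientGroup.quotientQuotientEquivQuotient ρ' R hρ'R) hQ)
  -- hence ρ' = R and ρ = ⊤
  have hR_le : R ≤ ρ' := resid_le hqual
  have hρ'eq : ρ' = R := le_antisymm hρ'R hR_le
  have hρtop : ρ = ⊤ := by
    apply Subgroup.map_injective R.subtype_injective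
    rw [← hρ'def, hρ'eq, map_subtype_top]
  -- conclude PerfP
  intro M hn hne
  by_contra h
  have hMq : M ∈ Qual T ↥R := ⟨hn, h⟩
  have := resid_le hMq
  rw [← hρdef, hρtop] at this
  exact hne (top_le_iff.mp this)

end Residual

theorem resid_map_subtype_normal {T G : Type} [Group T] [Group G] [Finite G]
    (hT : IsSimpleGroup T) (N : Subgroup G) [hN : N.Normal] :
    ((resid T ↥N).map N.subtype).Normal := by
  constructor
  intro x hx g
  obtain ⟨y, hy, rfl⟩ := hx
  set e : ↥N ≃* ↥N := (MulAut.conjNormal (H := N) g : MulAut ↥N) with hedef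
  have hmape : Subgroup.map e.toMonoidHom (resid T ↥N) = resid T ↥N := resid_map hT e
  have hey : e y ∈ resid T ↥N := by rw [← hmape]; exact ⟨y, hy, rfl⟩
  have hcoe : ((e y : ↥N) : G) = g * (y : G) * g⁻¹ := by
    rw [hedef]; exact MulAut.conjNormal_apply g y
  exact ⟨e y, hey, hcoe⟩



/-- `(G, p1, p2)` is a witness system for the compatibility of `(L1, L2)`:
`p1 : G → L1` and `p2 : G → L2` are surjective with isomorphic kernels. -/
structure IsWitnessSystem (L1 : Type) [Group L1] (L2 : Type) [Group L2]
    (G : Type) [Group G] (p1 : G →* L1) (p2 : G →* L2) : Prop where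
  surjective_fst : Function.Surjective p1
  surjective_snd : Function.Surjective p2
  ker_iso : Nonempty (↥p1.ker ≃* ↥p2.ker)

/-- A witness system whose group `G` has minimal order among all witness systems
for the compatibility of `(L1, L2)`. -/
def IsMinimalWitnessSystem (L1 : Type) [Group L1] (L2 : Type) [Group L2]
    (G : Type) [Group G] [Finite G] (p1 : G →* L1) (p2 : G →* L2) : Prop :=
  IsWitnessSystem L1 L2 G p1 p2 ∧
    ∀ (G' : Type) (_ : Group G') (_ : Finite G') (q1 : G' →* L1) (q2 : G' →* L2),
      IsWitnessSystem L1 L2 G' q1 q2 → Nat.card G ≤ Nat.card G'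

/-- A subgroup `H` of `G` is subnormal if there is a chain
`H = H_0 ⊴ H_1 ⊴ ⋯ ⊴ H_n = G` with each term normal in the next. -/
def IsSubnormal {G : Type} [Group G] (H : Subgroup G) : Prop :=
  ∃ (n : ℕ) (c : Fin (n + 1) → Subgroup G), c 0 = H ∧ c (Fin.last n) = ⊤ ∧
    ∀ i : Fin n, ((c i.castSucc).subgroupOf (c i.succ)).Normal

/-- A finite simple group `T` is a composition factor of `G` if there are subgroups
`K ⊴ H` of `G` with `H` subnormal in `G` and `H ⧸ K ≅ T`. -/
def IsCompositionFactorOf (T : Type) [Group T] (G : Type) [Group G] : Prop :=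
  ∃ (H K : Subgroup G) (_ : IsSubnormal H) (_ : K ≤ H) (h : (K.subgroupOf H).Normal),
    letI := h
    Nonempty ((↥H ⧸ K.subgroupOf H) ≃* T)

theorem isSubnormal_all {G : Type} [Group G] (H : Subgroup G) : IsSubnormal H := by
  refine ⟨2, ![H, ⊥, ⊤], rfl, rfl, ?_⟩
  intro i
  fin_cases i
  · show (H.subgroupOf ⊥).Normal
    constructor
    intro n hn g
    have : g * n * g⁻¹ = n := Subsingleton.elim _ _
    rw [this]; exact hn
  · show ((⊥ : Subgroup G).subgroupOf ⊤).Normal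
    constructor
    intro n hn g
    have hn1 : (n : G) = 1 := hn
    have : (↑(g * n * g⁻¹) : G) = 1 := by
      push_cast [hn1]
      group
    exact this

theorem iscf_iff_gsec (T G : Type) [Group T] [Group G] :
    IsCompositionFactorOf T G ↔ Gsec T G := by
  constructor
  · rintro ⟨H, K, hsub, hKH, hnorm, he⟩
    haveI := hnorm
    obtain ⟨e⟩ := he
    exact gsec_of_subgroup H (gsec_of_surjective
      (e.toMonoidHom.comp (QuotientGroup.mk' (K.subgroupOf H)))
      (e.surjective.comp (QuotientGroup.mk'_surjective _)))
  · rintro ⟨H, f, hf⟩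
    have hsub : (f.ker.map H.subtype).subgroupOf H = f.ker :=
      Subgroup.comap_map_eq_self_of_injective H.subtype_injective f.ker
    have hnorm : ((f.ker.map H.subtype).subgroupOf H).Normal := by
      rw [hsub]; infer_instance
    refine ⟨H, f.ker.map H.subtype, isSubnormal_all H, Subgroup.map_subtype_le f.ker, hnorm, ?_⟩
    haveI := hnorm
    exact ⟨(QuotientGroup.quotientMulEquivOfEq hsub).trans
      (QuotientGroup.quotientKerEquivOfSurjective f hf)⟩

/-- Lemma 3.4(v): in a minimal witness system, `L2` and `G` have the same set of
composition factors (ignoring multiplicity). -/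
theorem quot_comp_factors_of_minimal_witness
    (L1 : Type) [Group L1] [Finite L1] (L2 : Type) [Group L2] [Finite L2]
    (G : Type) [Group G] [Finite G] (p1 : G →* L1) (p2 : G →* L2)
    (hmin : IsMinimalWitnessSystem L1 L2 G p1 p2)
    (T : Type) [Group T] [Finite T] (hT : IsSimpleGroup T) :
    IsCompositionFactorOf T L2 ↔ IsCompositionFactorOf T G := by
  obtain ⟨hw, hmin⟩ := hmin
  have hp1 := hw.surjective_fst
  have hp2 := hw.surjective_snd
  rw [iscf_iff_gsec, iscf_iff_gsec]
  constructor
  · exact gsec_of_hom_surj p2 hp2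
  · intro hG
    by_contra hL2
    have e1 : (G ⧸ p1.ker) ≃* L1 := QuotientGroup.quotientKerEquivOfSurjective p1 hp1
    have e2 : (G ⧸ p2.ker) ≃* L2 := QuotientGroup.quotientKerEquivOfSurjective p2 hp2
    obtain ⟨φ⟩ := hw.ker_iso
    -- Step 1: T is not a section of L1 either (Jordan–Hölder counting).
    have hL1 : ¬ Gsec T L1 := by
      intro hsecL1
      obtain ⟨S, iS, fS, hSsimp, hScf, hTS⟩ :=
        gsec_exists_simple T hT (Nat.card L1) L1 le_rfl hsecL1
      obtain ⟨b, hbM, hbpos⟩ := hScf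
      have hb1 : Mult S (G ⧸ p1.ker) b := mult_congr hbM e1.symm
      obtain ⟨a, haM⟩ := mult_exists S (Nat.card ↥p1.ker) ↥p1.ker le_rfl
      have h1 : Mult S G (a + b) :=
        mult_add S (Nat.card (G ⧸ p1.ker)) (G ⧸ p1.ker) le_rfl hb1 G p1.ker
          (MulEquiv.refl _) haM
      have haM2 : Mult S ↥p2.ker a := mult_congr haM φ
      obtain ⟨c, hcM⟩ := mult_exists S (Nat.card (G ⧸ p2.ker)) (G ⧸ p2.ker) le_rfl
      have h2 : Mult S G (a + c) :=
        mult_add S (Nat.card (G ⧸ p2.ker)) (G ⧸ p2.ker) le_rfl hcM G p2.ker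
          (MulEquiv.refl _) haM2
      have hbc : a + b = a + c := mult_unique S (Nat.card G) G le_rfl h1 h2
      have hSL2 : Gsec S L2 := gsec_of_hasCF (hasCF_congr e2 ⟨c, hcM, by omega⟩)
      exact hL2 (gsec_trans hTS hSL2)
    -- Step 2: T is a section of both kernels.
    have hN2 : Gsec T ↥p2.ker := by
      rcases gsec_ext hT p2.ker inferInstance hG with h | h
      · exact h
      · exact absurd (gsec_iso e2 h) hL2
    have hN1 : Gsec T ↥p1.ker := gsec_iso φ.symm hN2
    -- Step 3: residuals
    set R1 : Subgroup ↥p1.ker := resid T ↥p1.ker with hR1def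
    set R2 : Subgroup ↥p2.ker := resid T ↥p2.ker with hR2def
    haveI hR1n : R1.Normal := resid_normal hT
    haveI hR2n : R2.Normal := resid_normal hT
    set ρ1 : Subgroup G := R1.map p1.ker.subtype with hρ1def
    set ρ2 : Subgroup G := R2.map p2.ker.subtype with hρ2def
    haveI hρ1n : ρ1.Normal := resid_map_subtype_normal hT p1.ker
    haveI hρ2n : ρ2.Normal := resid_map_subtype_normal hT p2.ker
    have hperf1 : PerfP T ↥ρ1 :=
      perfP_congr (R1.equivMapOfInjective p1.ker.subtype p1.ker.subtype_injective)
        (perf_resid hT)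
    have hperf2 : PerfP T ↥ρ2 :=
      perfP_congr (R2.equivMapOfInjective p2.ker.subtype p2.ker.subtype_injective)
        (perf_resid hT)
    -- ρ1 nontrivial
    have hρ1ne : ρ1 ≠ ⊥ := by
      intro hb
      have hR1bot : R1 = ⊥ := Subgroup.map_injective p1.ker.subtype_injective
        (hb.trans (Subgroup.map_bot p1.ker.subtype).symm)
      have hq := resid_not_gsec (X := ↥p1.ker) hT
      have ebot : ↥p1.ker ≃* (↥p1.ker ⧸ R1) :=
        (QuotientGroup.quotientBot (G := ↥p1.ker)).symm.trans
          (QuotientGroup.quotientMulEquivOfEq hR1bot.symm)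
      exact hq (gsec_iso ebot hN1)
    -- ρ1 ≤ ker p2
    have h12 : ρ1 ≤ p2.ker := by
      set h : ↥ρ1 →* L2 := p2.comp ρ1.subtype with hhdef
      by_cases hk : h.ker = ⊤
      · intro x hx
        have : (⟨x, hx⟩ : ↥ρ1) ∈ h.ker := hk ▸ Subgroup.mem_top _
        simpa [hhdef, MonoidHom.mem_ker, p2.mem_ker] using this
      · exfalso
        have hsec := hperf1 h.ker inferInstance hk
        have hr : Gsec T ↥h.range := gsec_iso (QuotientGroup.quotientKerEquivRange h) hsec
        exact hL2 (gsec_of_subgroup h.range hr)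
    have h21 : ρ2 ≤ p1.ker := by
      set h : ↥ρ2 →* L1 := p1.comp ρ2.subtype with hhdef
      by_cases hk : h.ker = ⊤
      · intro x hx
        have : (⟨x, hx⟩ : ↥ρ2) ∈ h.ker := hk ▸ Subgroup.mem_top _
        simpa [hhdef, MonoidHom.mem_ker, p1.mem_ker] using this
      · exfalso
        have hsec := hperf2 h.ker inferInstance hk
        have hr : Gsec T ↥h.range := gsec_iso (QuotientGroup.quotientKerEquivRange h) hsec
        exact hL1 (gsec_of_subgroup h.range hr)
    -- ρ1 ≤ ρ2 and ρ2 ≤ ρ1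
    have h1le2 : ρ1 ≤ ρ2 := by
      set w : ↥ρ1 →* (↥p2.ker ⧸ R2) :=
        (QuotientGroup.mk' R2).comp (Subgroup.inclusion h12) with hwdef
      by_cases hk : w.ker = ⊤
      · intro x hx
        have hxk : (⟨x, hx⟩ : ↥ρ1) ∈ w.ker := hk ▸ Subgroup.mem_top _
        have hincl : Subgroup.inclusion h12 (⟨x, hx⟩ : ↥ρ1) ∈ R2 := by
          have := hxk
          rw [hwdef, MonoidHom.mem_ker, MonoidHom.coe_comp, Function.comp_apply] at this
          exact (QuotientGroup.eq_one_iff _).mp this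
        exact ⟨_, hincl, rfl⟩
      · exfalso
        have hsec := hperf1 w.ker inferInstance hk
        have hr : Gsec T ↥w.range := gsec_iso (QuotientGroup.quotientKerEquivRange w) hsec
        exact (resid_not_gsec (X := ↥p2.ker) hT) (gsec_of_subgroup w.range hr)
    have h2le1 : ρ2 ≤ ρ1 := by
      set w : ↥ρ2 →* (↥p1.ker ⧸ R1) :=
        (QuotientGroup.mk' R1).comp (Subgroup.inclusion h21) with hwdef
      by_cases hk : w.ker = ⊤
      · intro x hx
        have hxk : (⟨x, hx⟩ : ↥ρ2) ∈ w.ker := hk ▸ Subgroup.mem_top _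
        have hincl : Subgroup.inclusion h21 (⟨x, hx⟩ : ↥ρ2) ∈ R1 := by
          have := hxk
          rw [hwdef, MonoidHom.mem_ker, MonoidHom.coe_comp, Function.comp_apply] at this
          exact (QuotientGroup.eq_one_iff _).mp this
        exact ⟨_, hincl, rfl⟩
      · exfalso
        have hsec := hperf2 w.ker inferInstance hk
        have hr : Gsec T ↥w.range := gsec_iso (QuotientGroup.quotientKerEquivRange w) hsec
        exact (resid_not_gsec (X := ↥p1.ker) hT) (gsec_of_subgroup w.range hr)
    have hρeq : ρ1 = ρ2 := le_antisymm h1le2 h2le1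
    -- Step 4: build a smaller witness system on G ⧸ ρ1.
    have hK1 : ρ1 ≤ p1.ker := Subgroup.map_subtype_le R1
    set q1 : (G ⧸ ρ1) →* L1 := QuotientGroup.lift ρ1 p1 (fun x hx => MonoidHom.mem_ker.mp (hK1 hx))
      with hq1def
    set q2 : (G ⧸ ρ1) →* L2 := QuotientGroup.lift ρ1 p2 (fun x hx => MonoidHom.mem_ker.mp (h12 hx))
      with hq2def
    have hq1s : Function.Surjective q1 := by
      intro l
      obtain ⟨x, rfl⟩ := hp1 l
      exact ⟨QuotientGroup.mk x, rfl⟩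
    have hq2s : Function.Surjective q2 := by
      intro l
      obtain ⟨x, rfl⟩ := hp2 l
      exact ⟨QuotientGroup.mk x, rfl⟩
    -- kernels of the lifts
    have hker1 : Nonempty (↥q1.ker ≃* (↥p1.ker ⧸ R1)) := by
      set ψ : ↥p1.ker →* ↥q1.ker :=
        ((QuotientGroup.mk' ρ1).comp p1.ker.subtype).codRestrict q1.ker
          (fun x => by
            simp only [MonoidHom.mem_ker, MonoidHom.coe_comp, Function.comp_apply]
            show q1 (QuotientGroup.mk (x : G)) = 1
            rw [hq1def]
            exact MonoidHom.mem_ker.mp x.2) with hψdef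
      have hψs : Function.Surjective ψ := by
        rintro ⟨z, hz⟩
        obtain ⟨x, rfl⟩ := QuotientGroup.mk_surjective z
        have hx : x ∈ p1.ker := by
          rw [MonoidHom.mem_ker] at hz ⊢
          rw [hq1def] at hz
          exact hz
        exact ⟨⟨x, hx⟩, rfl⟩
      have hψk : ψ.ker = R1 := by
        ext x
        simp only [hψdef, MonoidHom.mem_ker]
        constructor
        · intro hx
          have : ((QuotientGroup.mk' ρ1) (x : G)) = 1 := congrArg Subtype.val hx
          have hmem : (x : G) ∈ ρ1 := (QuotientGroup.eq_one_iff _).mp this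
          obtain ⟨y, hy, hyx⟩ := hmem
          rwa [← Subtype.ext hyx]
        · intro hx
          apply Subtype.ext
          show ((QuotientGroup.mk' ρ1) (x : G)) = 1
          exact (QuotientGroup.eq_one_iff _).mpr ⟨x, hx, rfl⟩
      exact ⟨((QuotientGroup.quotientMulEquivOfEq hψk.symm).trans
        (QuotientGroup.quotientKerEquivOfSurjective ψ hψs)).symm⟩
    have hker2 : Nonempty (↥q2.ker ≃* (↥p2.ker ⧸ R2)) := by
      set ψ : ↥p2.ker →* ↥q2.ker :=
        ((QuotientGroup.mk' ρ1).comp p2.ker.subtype).codRestrict q2.ker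
          (fun x => by
            simp only [MonoidHom.mem_ker, MonoidHom.coe_comp, Function.comp_apply]
            show q2 (QuotientGroup.mk (x : G)) = 1
            rw [hq2def]
            exact MonoidHom.mem_ker.mp x.2) with hψdef
      have hψs : Function.Surjective ψ := by
        rintro ⟨z, hz⟩
        obtain ⟨x, rfl⟩ := QuotientGroup.mk_surjective z
        have hx : x ∈ p2.ker := by
          rw [MonoidHom.mem_ker] at hz ⊢
          rw [hq2def] at hz
          exact hz
        exact ⟨⟨x, hx⟩, rfl⟩
      have hψk : ψ.ker = R2 := by
        ext x
        simp only [hψdef, MonoidHom.mem_ker]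
        constructor
        · intro hx
          have : ((QuotientGroup.mk' ρ1) (x : G)) = 1 := congrArg Subtype.val hx
          have hmem : (x : G) ∈ ρ1 := (QuotientGroup.eq_one_iff _).mp this
          rw [hρeq] at hmem
          obtain ⟨y, hy, hyx⟩ := hmem
          rwa [← Subtype.ext hyx]
        · intro hx
          apply Subtype.ext
          show ((QuotientGroup.mk' ρ1) (x : G)) = 1
          refine (QuotientGroup.eq_one_iff _).mpr ?_
          rw [hρeq]
          exact ⟨x, hx, rfl⟩
      exact ⟨((QuotientGroup.quotientMulEquivOfEq hψk.symm).trans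
        (QuotientGroup.quotientKerEquivOfSurjective ψ hψs)).symm⟩
    have hmid : (↥p1.ker ⧸ R1) ≃* (↥p2.ker ⧸ R2) :=
      QuotientGroup.congr R1 R2 φ (resid_map hT φ)
    have hwit : IsWitnessSystem L1 L2 (G ⧸ ρ1) q1 q2 :=
      ⟨hq1s, hq2s, ⟨hker1.some.trans (hmid.trans hker2.some.symm)⟩⟩
    have hcard := hmin (G ⧸ ρ1) inferInstance inferInstance q1 q2 hwit
    have hprod : Nat.card G = Nat.card (G ⧸ ρ1) * Nat.card ↥ρ1 :=
      Subgroup.card_eq_card_quotient_mul_card_subgroup ρ1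
    have hbig : 1 < Nat.card ↥ρ1 := (Subgroup.one_lt_card_iff_ne_bot ρ1).mpr hρ1ne
    have hpos : 0 < Nat.card (G ⧸ ρ1) := Nat.card_pos
    have h2 : Nat.card (G ⧸ ρ1) * 2 ≤ Nat.card G := by
      rw [hprod]
      exact Nat.mul_le_mul_left _ hbig
    omega
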